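/- arXiv:1810.06186 — 2 statements merged into one kernel-verified Lean document; each statement's English description precedes it below -/
import Mathlib

section
/- With the standard setup, suppose Y_{i-2} and Y_{i+2} are both non-empty for some i, and let A_i^- = N(Y_{i-2}) ∩ A_i and A_i^+ = N(Y_{i+2}) ∩ A_i. Then: (a) Y_{i-2} is complete to Y_{i+2}, A_i^- ∩ A_i^+ = ∅, and A_i^- is anticomplete to A_i^+; (b) A_i \ (A_i^- ∪ A_i^+) is anticomplete to A_i^- ∪ A_i^+; and (c) Y_{i-2} is complete to A_{i+1} ∪ A_i^- and Y_{i+2} is complete to A_{i-1} ∪ A_i^+. -/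
open SimpleGraph

/-- The gem: a path 0-1-2-3 on 4 vertices plus a fifth vertex 4 adjacent to all of them. -/
def gem : SimpleGraph (Fin 5) :=
  SimpleGraph.fromEdgeSet {s(0,1), s(1,2), s(2,3), s(4,0), s(4,1), s(4,2), s(4,3)}

/-- `G` is `H`-free: no induced subgraph of `G` is isomorphic to `H`. -/
def InducedFree {W V : Type*} (H : SimpleGraph W) (G : SimpleGraph V) : Prop :=
  ¬ Nonempty (H ↪g G)

/-- `G` is (P5, gem)-free. -/
def P5GemFree {V : Type*} (G : SimpleGraph V) : Prop :=
  InducedFree (SimpleGraph.pathGraph 5) G ∧ InducedFree gem G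

/-- `X` is complete to `Y`: every vertex of `X` is adjacent to every vertex of `Y`. -/
def CompleteTo {V : Type*} (G : SimpleGraph V) (X Y : Set V) : Prop :=
  ∀ x ∈ X, ∀ y ∈ Y, G.Adj x y

/-- `X` is anticomplete to `Y`: no vertex of `X` is adjacent to any vertex of `Y`. -/
def AnticompleteTo {V : Type*} (G : SimpleGraph V) (X Y : Set V) : Prop :=
  ∀ x ∈ X, ∀ y ∈ Y, ¬ G.Adj x y

/-- `X` is a homogeneous set: every vertex outside `X` with a neighbor in `X` is
complete to `X`. -/
def IsHomogeneousSet {V : Type*} (G : SimpleGraph V) (X : Set V) : Prop :=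
  ∀ v ∉ X, (∃ x ∈ X, G.Adj v x) → ∀ x ∈ X, G.Adj v x

/-- Five nonempty pairwise disjoint sets `A 0, …, A 4` such that (indices mod 5) each `A i` is
complete to `A (i-1) ∪ A (i+1)` and anticomplete to `A (i-2) ∪ A (i+2)`. -/
structure IsC5Partition {V : Type*} (G : SimpleGraph V) (A : Fin 5 → Set V) : Prop where
  nonempty : ∀ i, (A i).Nonempty
  disjoint : ∀ i j, i ≠ j → Disjoint (A i) (A j)
  complete_succ : ∀ i, CompleteTo G (A i) (A (i + 1))
  complete_pred : ∀ i, CompleteTo G (A i) (A (i - 1))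
  anticomplete_succ : ∀ i, AnticompleteTo G (A i) (A (i + 2))
  anticomplete_pred : ∀ i, AnticompleteTo G (A i) (A (i - 2))

/-- The set `Y_i`: vertices outside `A` that are complete to `A i`, anticomplete to
`A (i-1) ∪ A (i+1)`, have a neighbor in each of `A (i-2)` and `A (i+2)`, and are complete
to at least one of `A (i-2)`, `A (i+2)`. -/
def Yset {V : Type*} (G : SimpleGraph V) (A : Fin 5 → Set V) (i : Fin 5) : Set V :=
  {x | x ∉ (⋃ j, A j) ∧ (∀ a ∈ A i, G.Adj x a) ∧
    (∀ a ∈ A (i - 1), ¬ G.Adj x a) ∧ (∀ a ∈ A (i + 1), ¬ G.Adj x a) ∧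
    (∃ a ∈ A (i - 2), G.Adj x a) ∧ (∃ a ∈ A (i + 2), G.Adj x a) ∧
    ((∀ a ∈ A (i - 2), G.Adj x a) ∨ (∀ a ∈ A (i + 2), G.Adj x a))}

/-- The set `R`: vertices outside `A = ⋃ A i` with no neighbor in `A`. -/
def Rset {V : Type*} (G : SimpleGraph V) (A : Fin 5 → Set V) : Set V :=
  {x | x ∉ (⋃ j, A j) ∧ ∀ a ∈ ⋃ j, A j, ¬ G.Adj x a}

/-- A vertex of `Y_i` is pure if it is complete to `A (i-2) ∪ A (i+2)`. -/
def IsPureVertex {V : Type*} (G : SimpleGraph V) (A : Fin 5 → Set V) (i : Fin 5) (x : V) : Prop :=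
  (∀ a ∈ A (i - 2), G.Adj x a) ∧ (∀ a ∈ A (i + 2), G.Adj x a)

lemma gem_adj (x y : Fin 5) : gem.Adj x y ↔
    (s(x,y) = s(0,1) ∨ s(x,y) = s(1,2) ∨ s(x,y) = s(2,3) ∨ s(x,y) = s(4,0) ∨
      s(x,y) = s(4,1) ∨ s(x,y) = s(4,2) ∨ s(x,y) = s(4,3)) ∧ x ≠ y := by
  rw [gem, SimpleGraph.fromEdgeSet_adj]
  simp [Set.mem_insert_iff]

section AuxBuild
variable {V : Type*} (G : SimpleGraph V)

lemma mk_p5 (a b c d e : V)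
    (hab : G.Adj a b) (hbc : G.Adj b c) (hcd : G.Adj c d) (hde : G.Adj d e)
    (hac : ¬ G.Adj a c) (had : ¬ G.Adj a d) (hae : ¬ G.Adj a e)
    (hbd : ¬ G.Adj b d) (hbe : ¬ G.Adj b e) (hce : ¬ G.Adj c e) :
    Nonempty (SimpleGraph.pathGraph 5 ↪g G) := by
  have nab : a ≠ b := hab.ne
  have nbc : b ≠ c := hbc.ne
  have ncd : c ≠ d := hcd.ne
  have nde : d ≠ e := hde.ne
  have nac : a ≠ c := fun h => had (h ▸ hcd)
  have nad : a ≠ d := fun h => hae (h ▸ hde)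
  have nae : a ≠ e := fun h => had (h ▸ hde.symm)
  have nbd : b ≠ d := fun h => hbe (h ▸ hde)
  have nbe : b ≠ e := fun h => hae (h ▸ hab)
  have nce : c ≠ e := fun h => hbe (h ▸ hbc)
  refine ⟨⟨⟨![a,b,c,d,e], ?_⟩, ?_⟩⟩
  · intro x y hxy
    fin_cases x <;> fin_cases y <;> simp_all
  · intro x y
    show G.Adj (![a,b,c,d,e] x) (![a,b,c,d,e] y) ↔ _
    have hba := hab.symm; have hcb := hbc.symm; have hdc := hcd.symm; have hed := hde.symm
    have hca := fun h => hac (G.adj_symm h); have hda := fun h => had (G.adj_symm h)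
    have hea := fun h => hae (G.adj_symm h); have hdb := fun h => hbd (G.adj_symm h)
    have heb := fun h => hbe (G.adj_symm h); have hec := fun h => hce (G.adj_symm h)
    fin_cases x <;> fin_cases y <;>
      simp_all [SimpleGraph.pathGraph_adj] <;> decide

lemma mk_gem (p0 p1 p2 p3 q : V)
    (h01 : G.Adj p0 p1) (h12 : G.Adj p1 p2) (h23 : G.Adj p2 p3)
    (hq0 : G.Adj q p0) (hq1 : G.Adj q p1) (hq2 : G.Adj q p2) (hq3 : G.Adj q p3)
    (h02 : ¬ G.Adj p0 p2) (h03 : ¬ G.Adj p0 p3) (h13 : ¬ G.Adj p1 p3) :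
    Nonempty (gem ↪g G) := by
  have n01 : p0 ≠ p1 := h01.ne
  have n12 : p1 ≠ p2 := h12.ne
  have n23 : p2 ≠ p3 := h23.ne
  have nq0 : q ≠ p0 := hq0.ne
  have nq1 : q ≠ p1 := hq1.ne
  have nq2 : q ≠ p2 := hq2.ne
  have nq3 : q ≠ p3 := hq3.ne
  have n02 : p0 ≠ p2 := fun h => h03 (h ▸ h23)
  have n03 : p0 ≠ p3 := fun h => h02 (h ▸ h23.symm)
  have n13 : p1 ≠ p3 := fun h => h03 (h ▸ h01)
  refine ⟨⟨⟨![p0,p1,p2,p3,q], ?_⟩, ?_⟩⟩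
  · intro x y hxy
    fin_cases x <;> fin_cases y <;> simp_all
  · intro x y
    show G.Adj (![p0,p1,p2,p3,q] x) (![p0,p1,p2,p3,q] y) ↔ _
    have h10 := h01.symm; have h21 := h12.symm; have h32 := h23.symm
    have h0q := hq0.symm; have h1q := hq1.symm; have h2q := hq2.symm; have h3q := hq3.symm
    have h20 := fun h => h02 (G.adj_symm h); have h30 := fun h => h03 (G.adj_symm h)
    have h31 := fun h => h13 (G.adj_symm h)
    fin_cases x <;> fin_cases y <;> rw [gem_adj] <;> simp_all

end AuxBuild

/-- Claim 2.7 (a)-(c): suppose `Y (i-2)` and `Y (i+2)` are both non-empty, and let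
`A⁻ = N(Y (i-2)) ∩ A i` and `A⁺ = N(Y (i+2)) ∩ A i`. Then (a) `Y (i-2)` is complete to
`Y (i+2)`, `A⁻ ∩ A⁺ = ∅` and `A⁻` is anticomplete to `A⁺`; (b) `A i \ (A⁻ ∪ A⁺)` is
anticomplete to `A⁻ ∪ A⁺`; (c) `Y (i-2)` is complete to `A (i+1) ∪ A⁻` and `Y (i+2)` is
complete to `A (i-1) ∪ A⁺`. -/
theorem two_ysets_abc {V : Type*} [Fintype V] (G : SimpleGraph V)
    (hconn : G.Connected) (hfree : P5GemFree G)
    (hC5 : Nonempty (SimpleGraph.cycleGraph 5 ↪g G))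
    (A : Fin 5 → Set V) (hA : IsC5Partition G A)
    (hmax : ∀ B : Fin 5 → Set V, IsC5Partition G B → ¬ (⋃ i, A i) ⊂ (⋃ i, B i))
    (i : Fin 5)
    (hm : (Yset G A (i - 2)).Nonempty) (hp : (Yset G A (i + 2)).Nonempty)
    (Am Ap : Set V)
    (hAm : Am = {a | a ∈ A i ∧ ∃ y ∈ Yset G A (i - 2), G.Adj y a})
    (hAp : Ap = {a | a ∈ A i ∧ ∃ y ∈ Yset G A (i + 2), G.Adj y a}) :
    (CompleteTo G (Yset G A (i - 2)) (Yset G A (i + 2)) ∧ Am ∩ Ap = ∅ ∧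
        AnticompleteTo G Am Ap) ∧
      AnticompleteTo G (A i \ (Am ∪ Ap)) (Am ∪ Ap) ∧
      (CompleteTo G (Yset G A (i - 2)) (A (i + 1) ∪ Am) ∧
        CompleteTo G (Yset G A (i + 2)) (A (i - 1) ∪ Ap)) := by
  obtain ⟨hP5, hGem⟩ := hfree
  have e1 : ∀ j : Fin 5, j - 2 - 1 = j + 2 := by decide
  have e2 : ∀ j : Fin 5, j - 2 + 1 = j - 1 := by decide
  have e3 : ∀ j : Fin 5, j - 2 - 2 = j + 1 := by decide
  have e4 : ∀ j : Fin 5, j - 2 + 2 = j := by decide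
  have e5 : ∀ j : Fin 5, j + 2 - 1 = j + 1 := by decide
  have e6 : ∀ j : Fin 5, j + 2 + 1 = j - 2 := by decide
  have e7 : ∀ j : Fin 5, j + 2 - 2 = j := by decide
  have e8 : ∀ j : Fin 5, j + 2 + 2 = j - 1 := by decide
  have e9 : ∀ j : Fin 5, j + 1 + 2 = j - 2 := by decide
  have e10 : ∀ j : Fin 5, j + 1 - 2 = j - 1 := by decide
  have cip1 : ∀ a ∈ A i, ∀ b ∈ A (i+1), G.Adj a b := hA.complete_succ i
  have cim1 : ∀ a ∈ A i, ∀ b ∈ A (i-1), G.Adj a b := hA.complete_pred i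
  have cm2m1 : ∀ a ∈ A (i-2), ∀ b ∈ A (i-1), G.Adj a b := by
    have h := hA.complete_succ (i-2); rwa [e2 i] at h
  have ap1m2 : ∀ a ∈ A (i+1), ∀ b ∈ A (i-2), ¬ G.Adj a b := by
    have h := hA.anticomplete_succ (i+1); rwa [e9 i] at h
  have ap1m1 : ∀ a ∈ A (i+1), ∀ b ∈ A (i-1), ¬ G.Adj a b := by
    have h := hA.anticomplete_pred (i+1); rwa [e10 i] at h
  have memYm : ∀ u ∈ Yset G A (i-2),
      (∀ a ∈ A (i-2), G.Adj u a) ∧ (∀ a ∈ A (i+2), ¬ G.Adj u a) ∧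
      (∀ a ∈ A (i-1), ¬ G.Adj u a) ∧ (∃ a ∈ A (i+1), G.Adj u a) ∧
      (∃ a ∈ A i, G.Adj u a) ∧
      ((∀ a ∈ A (i+1), G.Adj u a) ∨ (∀ a ∈ A i, G.Adj u a)) := by
    intro u hu
    obtain ⟨-, h1, h2, h3, h4, h5, h6⟩ := hu
    rw [e1 i] at h2; rw [e2 i] at h3; rw [e3 i] at h4; rw [e4 i] at h5
    rw [e3 i, e4 i] at h6
    exact ⟨h1, h2, h3, h4, h5, h6⟩
  have memYp : ∀ v ∈ Yset G A (i+2),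
      (∀ a ∈ A (i+2), G.Adj v a) ∧ (∀ a ∈ A (i+1), ¬ G.Adj v a) ∧
      (∀ a ∈ A (i-2), ¬ G.Adj v a) ∧ (∃ a ∈ A i, G.Adj v a) ∧
      (∃ a ∈ A (i-1), G.Adj v a) ∧
      ((∀ a ∈ A i, G.Adj v a) ∨ (∀ a ∈ A (i-1), G.Adj v a)) := by
    intro v hv
    obtain ⟨-, h1, h2, h3, h4, h5, h6⟩ := hv
    rw [e5 i] at h2; rw [e6 i] at h3; rw [e7 i] at h4; rw [e8 i] at h5
    rw [e7 i, e8 i] at h6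
    exact ⟨h1, h2, h3, h4, h5, h6⟩
  have step1 : ∀ u ∈ Yset G A (i-2), ∀ v ∈ Yset G A (i+2), G.Adj u v := by
    intro u hu v hv
    by_contra huv
    obtain ⟨hu1, hu2, hu3, ⟨b, hb, hub⟩, -, -⟩ := memYm u hu
    obtain ⟨hv1, hv2, hv3, -, ⟨c, hc, hvc⟩, -⟩ := memYp v hv
    obtain ⟨d, hd⟩ := hA.nonempty (i-2)
    exact hP5 (mk_p5 G b u d c v hub.symm (hu1 d hd) (cm2m1 d hd c hc) hvc.symm
      (ap1m2 b hb d hd) (ap1m1 b hb c hc) (fun h => hv2 b hb h.symm)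
      (hu3 c hc) huv (fun h => hv3 d hd h.symm))
  have step2 : ∀ u ∈ Yset G A (i-2), ∀ v ∈ Yset G A (i+2), ∀ a ∈ A i,
      G.Adj u a → G.Adj v a → False := by
    intro u hu v hv a ha hua hva
    obtain ⟨-, -, hu3, ⟨b, hb, hub⟩, -, -⟩ := memYm u hu
    obtain ⟨-, hv2, -, -, ⟨c, hc, hvc⟩, -⟩ := memYp v hv
    exact hGem (mk_gem G b u v c a hub.symm (step1 u hu v hv) hvc
      (cip1 a ha b hb) hua.symm hva.symm (cim1 a ha c hc)
      (fun h => hv2 b hb h.symm) (ap1m1 b hb c hc) (hu3 c hc))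
  have step3 : ∀ u ∈ Yset G A (i-2), ∀ b ∈ A (i+1), G.Adj u b := by
    intro u hu b hb
    rcases (memYm u hu).2.2.2.2.2 with h | h
    · exact h b hb
    · obtain ⟨v, hv⟩ := hp
      obtain ⟨a, ha, hva⟩ := (memYp v hv).2.2.2.1
      exact (step2 u hu v hv a ha (h a ha) hva).elim
  have step3' : ∀ v ∈ Yset G A (i+2), ∀ c ∈ A (i-1), G.Adj v c := by
    intro v hv c hc
    rcases (memYp v hv).2.2.2.2.2 with h | h
    · obtain ⟨u, hu⟩ := hm
      obtain ⟨a, ha, hua⟩ := (memYm u hu).2.2.2.2.1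
      exact (step2 u hu v hv a ha hua (h a ha)).elim
    · exact h c hc
  have step4 : ∀ u ∈ Yset G A (i-2), ∀ a ∈ A i, ∀ a' ∈ A i,
      G.Adj u a → ¬ G.Adj u a' → ¬ G.Adj a a' := by
    intro u hu a ha a' ha' hua hua' haa'
    obtain ⟨b, hb⟩ := hA.nonempty (i+1)
    obtain ⟨c, hc⟩ := hA.nonempty (i-1)
    exact hGem (mk_gem G u b a' c a
      (step3 u hu b hb) (cip1 a' ha' b hb).symm (cim1 a' ha' c hc)
      hua.symm (cip1 a ha b hb) haa' (cim1 a ha c hc)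
      hua' ((memYm u hu).2.2.1 c hc) (ap1m1 b hb c hc))
  have step4' : ∀ v ∈ Yset G A (i+2), ∀ a ∈ A i, ∀ a' ∈ A i,
      G.Adj v a → ¬ G.Adj v a' → ¬ G.Adj a a' := by
    intro v hv a ha a' ha' hva hva' haa'
    obtain ⟨b, hb⟩ := hA.nonempty (i+1)
    obtain ⟨c, hc⟩ := hA.nonempty (i-1)
    exact hGem (mk_gem G v c a' b a
      (step3' v hv c hc) (cim1 a' ha' c hc).symm (cip1 a' ha' b hb)
      hva.symm (cim1 a ha c hc) haa' (cip1 a ha b hb)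
      hva' ((memYp v hv).2.1 b hb) (fun h => ap1m1 b hb c hc h.symm))
  have step5 : ∀ u ∈ Yset G A (i-2), ∀ a ∈ A i,
      (∃ u' ∈ Yset G A (i-2), G.Adj u' a) → G.Adj u a := by
    intro u hu a ha hex
    obtain ⟨u', hu', hu'a⟩ := hex
    by_contra hua
    obtain ⟨v, hv⟩ := hp
    have huv := step1 u hu v hv
    have hu'v := step1 u' hu' v hv
    have hva : ¬ G.Adj v a := fun h => step2 u' hu' v hv a ha hu'a h
    obtain ⟨a1, ha1, hua1⟩ := (memYm u hu).2.2.2.2.1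
    have hva1 : ¬ G.Adj v a1 := fun h => step2 u hu v hv a1 ha1 hua1 h
    have ha1a : ¬ G.Adj a1 a := step4 u hu a1 ha1 a ha hua1 hua
    obtain ⟨b, hb⟩ := hA.nonempty (i+1)
    by_cases huu' : G.Adj u u'
    · exact hGem (mk_gem G a b u v u'
        (cip1 a ha b hb) (step3 u hu b hb).symm huv
        hu'a (step3 u' hu' b hb) huu'.symm hu'v
        (fun h => hua h.symm) (fun h => hva h.symm)
        (fun h => (memYp v hv).2.1 b hb h.symm))
    · by_cases hu'a1 : G.Adj u' a1
      · exact hGem (mk_gem G a u' a1 u b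
          hu'a.symm hu'a1 hua1.symm
          (cip1 a ha b hb).symm (step3 u' hu' b hb).symm (cip1 a1 ha1 b hb).symm
          (step3 u hu b hb).symm
          (fun h => ha1a h.symm) (fun h => hua h.symm) (fun h => huu' h.symm))
      · exact hP5 (mk_p5 G a1 u v u' a
          hua1.symm huv hu'v.symm hu'a
          (fun h => hva1 h.symm) (fun h => hu'a1 h.symm) ha1a
          huu' hua hva)
  have step5' : ∀ v ∈ Yset G A (i+2), ∀ a ∈ A i,
      (∃ v' ∈ Yset G A (i+2), G.Adj v' a) → G.Adj v a := by
    intro v hv a ha hex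
    obtain ⟨v', hv', hv'a⟩ := hex
    by_contra hva
    obtain ⟨u, hu⟩ := hm
    have huv := step1 u hu v hv
    have huv' := step1 u hu v' hv'
    have hua : ¬ G.Adj u a := fun h => step2 u hu v' hv' a ha h hv'a
    obtain ⟨a1, ha1, hva1⟩ := (memYp v hv).2.2.2.1
    have hua1 : ¬ G.Adj u a1 := fun h => step2 u hu v hv a1 ha1 h hva1
    have ha1a : ¬ G.Adj a1 a := step4' v hv a1 ha1 a ha hva1 hva
    obtain ⟨c, hc⟩ := hA.nonempty (i-1)
    by_cases hvv' : G.Adj v v'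
    · exact hGem (mk_gem G a c v u v'
        (cim1 a ha c hc) (step3' v hv c hc).symm huv.symm
        hv'a (step3' v' hv' c hc) hvv'.symm huv'.symm
        (fun h => hva h.symm) (fun h => hua h.symm)
        (fun h => (memYm u hu).2.2.1 c hc h.symm))
    · by_cases hv'a1 : G.Adj v' a1
      · exact hGem (mk_gem G a v' a1 v c
          hv'a.symm hv'a1 hva1.symm
          (cim1 a ha c hc).symm (step3' v' hv' c hc).symm (cim1 a1 ha1 c hc).symm
          (step3' v hv c hc).symm
          (fun h => ha1a h.symm) (fun h => hva h.symm) (fun h => hvv' h.symm))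
      · exact hP5 (mk_p5 G a1 v u v' a
          hva1.symm huv.symm huv' hv'a
          (fun h => hua1 h.symm) (fun h => hv'a1 h.symm) ha1a
          hvv' hva hua)
  subst hAm hAp
  refine ⟨⟨step1, ?_, ?_⟩, ?_, ?_, ?_⟩
  · apply Set.eq_empty_iff_forall_notMem.mpr
    rintro a ⟨⟨ha, u, hu, hua⟩, ⟨-, v, hv, hva⟩⟩
    exact step2 u hu v hv a ha hua hva
  · rintro a ⟨ha, u, hu, hua⟩ a' ⟨ha', v, hv, hva'⟩ haa'
    exact step4 u hu a ha a' ha' hua (fun h => step2 u hu v hv a' ha' h hva') haa'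
  · rintro x ⟨hxA, hxn⟩ y hy hxy
    rcases hy with ⟨hyA, u, hu, huy⟩ | ⟨hyA, v, hv, hvy⟩
    · have hux : ¬ G.Adj u x := fun h => hxn (Set.mem_union_left _ ⟨hxA, u, hu, h⟩)
      exact step4 u hu y hyA x hxA huy hux hxy.symm
    · have hvx : ¬ G.Adj v x := fun h => hxn (Set.mem_union_right _ ⟨hxA, v, hv, h⟩)
      exact step4' v hv y hyA x hxA hvy hvx hxy.symm
  · intro u hu t ht
    rcases ht with ht | ⟨htA, u', hu', hu't⟩
    · exact step3 u hu t ht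
    · exact step5 u hu t htA ⟨u', hu', hu't⟩
  · intro v hv t ht
    rcases ht with ht | ⟨htA, v', hv', hv't⟩
    · exact step3' v hv t ht
    · exact step5' v hv t htA ⟨v', hv', hv't⟩
end

section
/- With the standard setup, the vertex set of each connected component of the subgraph of G induced by R is a homogeneous set of G, and hence each component of G[R] is P4-free. -/
open SimpleGraph

instance : DecidableRel gem.Adj := fun a b =>
  decidable_of_iff ((s(a,b) = s(0,1) ∨ s(a,b) = s(1,2) ∨ s(a,b) = s(2,3) ∨ s(a,b) = s(4,0) ∨
      s(a,b) = s(4,1) ∨ s(a,b) = s(4,2) ∨ s(a,b) = s(4,3)) ∧ a ≠ b)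
    (by rw [gem, SimpleGraph.fromEdgeSet_adj]; simp [Set.mem_insert_iff])

instance (n : ℕ) : DecidableRel (SimpleGraph.pathGraph n).Adj := fun _ _ =>
  decidable_of_iff _ (SimpleGraph.pathGraph_adj).symm

/-- Build an induced embedding of a graph on `Fin n` from an adjacency table. -/
def embed_of_table {n : ℕ} {V : Type*} (H : SimpleGraph (Fin n)) (G : SimpleGraph V)
    (f : Fin n → V) (hinj : ∀ i j, i ≠ j → f i ≠ f j)
    (hadj : ∀ i j, H.Adj i j → G.Adj (f i) (f j))
    (hnadj : ∀ i j, i ≠ j → ¬ H.Adj i j → ¬ G.Adj (f i) (f j)) : H ↪g G where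
  toFun := f
  inj' i j h := by by_contra hne; exact hinj i j hne h
  map_rel_iff' := by
    intro a b
    constructor
    · intro hG
      by_contra hH
      rcases eq_or_ne a b with rfl | hne
      · exact G.irrefl hG
      · exact hnadj a b hne hH hG
    · exact hadj a b

lemma walk_transition {V : Type*} {G : SimpleGraph V} (P : V → Prop) :
    ∀ {x y : V} (_ : G.Walk x y), P x → ¬ P y →
      ∃ p q, G.Adj p q ∧ P p ∧ ¬ P q ∧ G.Reachable x p ∧ G.Reachable x q
  | x, _, SimpleGraph.Walk.nil, hx, hy => absurd hx hy
  | x, y, SimpleGraph.Walk.cons (v := a) h w, hx, hy => by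
    by_cases ha : P a
    · obtain ⟨p, q, h1, h2, h3, h4, h5⟩ := walk_transition P w ha hy
      exact ⟨p, q, h1, h2, h3, (h.reachable).trans h4, (h.reachable).trans h5⟩
    · exact ⟨x, a, h, hx, ha, Reachable.refl x, h.reachable⟩

/-- Claim 2.8: the vertex set of each connected component of `G[R]` is a homogeneous set of
`G`, and hence each such component is P4-free. -/
theorem components_of_R_homogeneous {V : Type*} [Fintype V] (G : SimpleGraph V)
    (hconn : G.Connected) (hfree : P5GemFree G)
    (hC5 : Nonempty (SimpleGraph.cycleGraph 5 ↪g G))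
    (A : Fin 5 → Set V) (hA : IsC5Partition G A)
    (hmax : ∀ B : Fin 5 → Set V, IsC5Partition G B → ¬ (⋃ i, A i) ⊂ (⋃ i, B i)) :
    ∀ C : (G.induce (Rset G A)).ConnectedComponent,
      IsHomogeneousSet G (Subtype.val '' C.supp) ∧
        InducedFree (SimpleGraph.pathGraph 4) (G.induce (Subtype.val '' C.supp)) := by
  obtain ⟨hP5, hgem⟩ := hfree
  intro C
  have hhom : IsHomogeneousSet G (Subtype.val '' C.supp) := by
    rintro v hv ⟨x0, hx0, hvx0⟩
    by_contra hnot
    push_neg at hnot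
    obtain ⟨y0, hy0, hvy0⟩ := hnot
    obtain ⟨x, hxC, rfl⟩ := hx0
    obtain ⟨y, hyC, rfl⟩ := hy0
    rw [ConnectedComponent.mem_supp_iff] at hxC hyC
    have hreach : (G.induce (Rset G A)).Reachable x y :=
      ConnectedComponent.exact (hxC.trans hyC.symm)
    obtain ⟨p, q, hpq, hvp, hvq, hxp, hxq⟩ :=
      walk_transition (fun z : Rset G A => G.Adj v z.val) hreach.some hvx0 hvy0
    have hpqG : G.Adj p.val q.val := hpq
    have hpC : p ∈ C.supp := by
      rw [ConnectedComponent.mem_supp_iff, ← hxC]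
      exact (ConnectedComponent.sound hxp).symm
    have hqC : q ∈ C.supp := by
      rw [ConnectedComponent.mem_supp_iff, ← hxC]
      exact (ConnectedComponent.sound hxq).symm
    have hr1R : p.val ∈ Rset G A := p.2
    have hr2R : q.val ∈ Rset G A := q.2
    have hvA : v ∉ ⋃ j, A j := fun h => hr1R.2 v h hvp.symm
    have hvR : v ∉ Rset G A := by
      intro hvR
      apply hv
      refine ⟨⟨v, hvR⟩, ?_, rfl⟩
      have hpC' : (G.induce (Rset G A)).connectedComponentMk p = C := hpC
      rw [ConnectedComponent.mem_supp_iff, ← hpC']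
      exact ConnectedComponent.sound
        (Adj.reachable (show (G.induce (Rset G A)).Adj ⟨v, hvR⟩ p from hvp))
    have hvNA : ∃ a ∈ ⋃ j, A j, G.Adj v a := by
      by_contra h; push_neg at h; exact hvR ⟨hvA, h⟩
    by_cases hgood :
        ∀ a b, a ∈ (⋃ j, A j) → b ∈ (⋃ j, A j) → G.Adj a b → G.Adj v a → G.Adj v b
    · -- v is complete to A; build a gem
      obtain ⟨a, haU, hva⟩ := hvNA
      obtain ⟨i, hai⟩ := Set.mem_iUnion.1 haU
      have step : ∀ j : Fin 5, (∃ c ∈ A j, G.Adj v c) → ∀ b ∈ A (j + 1), G.Adj v b := by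
        rintro j ⟨c, hc, hvc⟩ b hb
        exact hgood c b (Set.mem_iUnion.2 ⟨j, hc⟩) (Set.mem_iUnion.2 ⟨j + 1, hb⟩)
          (hA.complete_succ j c hc b hb) hvc
      have stepE : ∀ j : Fin 5, (∀ b ∈ A j, G.Adj v b) → ∀ b ∈ A (j + 1), G.Adj v b := by
        intro j hj
        obtain ⟨c, hc⟩ := hA.nonempty j
        exact step j ⟨c, hc, hj c hc⟩
      have h1 : ∀ b ∈ A (i + 1), G.Adj v b := step i ⟨a, hai, hva⟩
      have h2 := stepE _ h1
      have h3 := stepE _ h2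
      have h4 := stepE _ h3
      have h5 := stepE _ h4
      have e0 : i + 1 + 1 + 1 + 1 + 1 = i := by
        have h50 : (1 : Fin 5) + 1 + 1 + 1 + 1 = 0 := by decide
        calc i + 1 + 1 + 1 + 1 + 1 = i + ((1 : Fin 5) + 1 + 1 + 1 + 1) := by open Fin.CommRing in ring
          _ = i + 0 := by rw [h50]
          _ = i := add_zero i
      rw [e0] at h5
      rw [show i + 1 + 1 + 1 + 1 = i + 4 from by open Fin.CommRing in ring] at h4
      rw [show i + 1 + 1 + 1 = i + 3 from by open Fin.CommRing in ring] at h3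
      rw [show i + 1 + 1 = i + 2 from by open Fin.CommRing in ring] at h2
      have hcomp : ∀ b ∈ ⋃ j, A j, G.Adj v b := by
        intro b hb
        obtain ⟨j, hj⟩ := Set.mem_iUnion.1 hb
        obtain ⟨d, rfl⟩ : ∃ d : Fin 5, j = i + d := ⟨j - i, by open Fin.CommRing in ring⟩
        fin_cases d
        · exact h5 b (by simpa using hj)
        · exact h1 b hj
        · exact h2 b hj
        · exact h3 b hj
        · exact h4 b hj
      obtain ⟨a0, ha0⟩ := hA.nonempty 0
      obtain ⟨a1, ha1⟩ := hA.nonempty 1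
      obtain ⟨a2, ha2⟩ := hA.nonempty 2
      obtain ⟨a3, ha3⟩ := hA.nonempty 3
      have hU : ∀ k : Fin 5, ∀ x ∈ A k, x ∈ ⋃ j, A j := fun k x hx => Set.mem_iUnion.2 ⟨k, hx⟩
      have hne : ∀ (k l : Fin 5), k ≠ l → ∀ x ∈ A k, ∀ y ∈ A l, x ≠ y := by
        intro k l hkl x hx y hy hxy
        exact Set.disjoint_left.1 (hA.disjoint k l hkl) hx (hxy ▸ hy)
      have g01 : G.Adj a0 a1 := hA.complete_succ 0 a0 ha0 a1 ha1
      have g12 : G.Adj a1 a2 := hA.complete_succ 1 a1 ha1 a2 ha2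
      have g23 : G.Adj a2 a3 := hA.complete_succ 2 a2 ha2 a3 ha3
      have gn02 : ¬ G.Adj a0 a2 := hA.anticomplete_succ 0 a0 ha0 a2 ha2
      have gn13 : ¬ G.Adj a1 a3 := hA.anticomplete_succ 1 a1 ha1 a3 ha3
      have gn03 : ¬ G.Adj a0 a3 := hA.anticomplete_pred 0 a0 ha0 a3 ha3
      have gv0 : G.Adj v a0 := hcomp a0 (hU 0 a0 ha0)
      have gv1 : G.Adj v a1 := hcomp a1 (hU 1 a1 ha1)
      have gv2 : G.Adj v a2 := hcomp a2 (hU 2 a2 ha2)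
      have gv3 : G.Adj v a3 := hcomp a3 (hU 3 a3 ha3)
      have d01 : a0 ≠ a1 := hne 0 1 (by decide) a0 ha0 a1 ha1
      have d02 : a0 ≠ a2 := hne 0 2 (by decide) a0 ha0 a2 ha2
      have d03 : a0 ≠ a3 := hne 0 3 (by decide) a0 ha0 a3 ha3
      have d12 : a1 ≠ a2 := hne 1 2 (by decide) a1 ha1 a2 ha2
      have d13 : a1 ≠ a3 := hne 1 3 (by decide) a1 ha1 a3 ha3
      have d23 : a2 ≠ a3 := hne 2 3 (by decide) a2 ha2 a3 ha3
      have dv : ∀ k : Fin 5, ∀ x ∈ A k, v ≠ x := fun k x hx h => hvA (h ▸ hU k x hx)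
      refine hgem ⟨embed_of_table gem G ![a0, a1, a2, a3, v] ?_ ?_ ?_⟩
      · intro i' j' hij
        fin_cases i' <;> fin_cases j' <;>
          first
            | exact absurd rfl hij
            | exact d01 | exact d01.symm | exact d02 | exact d02.symm
            | exact d03 | exact d03.symm | exact d12 | exact d12.symm
            | exact d13 | exact d13.symm | exact d23 | exact d23.symm
            | exact (dv 0 a0 ha0).symm | exact (dv 1 a1 ha1).symm
            | exact (dv 2 a2 ha2).symm | exact (dv 3 a3 ha3).symm
            | exact dv 0 a0 ha0 | exact dv 1 a1 ha1
            | exact dv 2 a2 ha2 | exact dv 3 a3 ha3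
      · intro i' j' h
        fin_cases i' <;> fin_cases j' <;>
          first
            | exact absurd h (by decide)
            | exact g01 | exact g01.symm | exact g12 | exact g12.symm
            | exact g23 | exact g23.symm
            | exact gv0 | exact gv0.symm | exact gv1 | exact gv1.symm
            | exact gv2 | exact gv2.symm | exact gv3 | exact gv3.symm
      · intro i' j' hij h
        fin_cases i' <;> fin_cases j' <;>
          first
            | exact absurd rfl hij
            | exact absurd (by decide) h
            | exact gn02 | exact fun hx => gn02 hx.symm
            | exact gn03 | exact fun hx => gn03 hx.symm
            | exact gn13 | exact fun hx => gn13 hx.symm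
    · -- bad pair gives a P5
      push_neg at hgood
      obtain ⟨a, b, haU, hbU, hab, hva, hvb⟩ := hgood
      have e01 : G.Adj q.val p.val := hpqG.symm
      have e12 : G.Adj p.val v := hvp.symm
      have n02 : ¬ G.Adj q.val v := fun h => hvq h.symm
      have n03 : ¬ G.Adj q.val a := hr2R.2 a haU
      have n04 : ¬ G.Adj q.val b := hr2R.2 b hbU
      have n13 : ¬ G.Adj p.val a := hr1R.2 a haU
      have n14 : ¬ G.Adj p.val b := hr1R.2 b hbU
      have d02 : q.val ≠ v := fun h => hv ⟨q, hqC, h.symm ▸ rfl⟩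
      have d12v : p.val ≠ v := fun h => hv ⟨p, hpC, h.symm ▸ rfl⟩
      have d03 : q.val ≠ a := fun h => hr2R.1 (h ▸ haU)
      have d04 : q.val ≠ b := fun h => hr2R.1 (h ▸ hbU)
      have d13 : p.val ≠ a := fun h => hr1R.1 (h ▸ haU)
      have d14 : p.val ≠ b := fun h => hr1R.1 (h ▸ hbU)
      have d24 : v ≠ b := fun h => hvA (h ▸ hbU)
      refine hP5 ⟨embed_of_table (SimpleGraph.pathGraph 5) G ![q.val, p.val, v, a, b] ?_ ?_ ?_⟩
      · intro i' j' hij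
        fin_cases i' <;> fin_cases j' <;>
          first
            | exact absurd rfl hij
            | exact e01.ne | exact e01.ne.symm
            | exact e12.ne | exact e12.ne.symm
            | exact hva.ne | exact hva.ne.symm
            | exact hab.ne | exact hab.ne.symm
            | exact d02 | exact d02.symm | exact d03 | exact d03.symm
            | exact d04 | exact d04.symm | exact d13 | exact d13.symm
            | exact d14 | exact d14.symm | exact d24 | exact d24.symm
            | exact d12v | exact d12v.symm
      · intro i' j' h
        fin_cases i' <;> fin_cases j' <;>
          first
            | exact absurd h (by decide)
            | exact e01 | exact e01.symm
            | exact e12 | exact e12.symm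
            | exact hva | exact hva.symm
            | exact hab | exact hab.symm
      · intro i' j' hij h
        fin_cases i' <;> fin_cases j' <;>
          first
            | exact absurd rfl hij
            | exact absurd (by decide) h
            | exact n02 | exact fun hx => n02 hx.symm
            | exact n03 | exact fun hx => n03 hx.symm
            | exact n04 | exact fun hx => n04 hx.symm
            | exact n13 | exact fun hx => n13 hx.symm
            | exact n14 | exact fun hx => n14 hx.symm
            | exact hvb | exact fun hx => hvb hx.symm
  refine ⟨hhom, ?_⟩
  rintro ⟨e⟩
  set S := Subtype.val '' C.supp with hS
  have hbadj : ∀ i j, (SimpleGraph.pathGraph 4).Adj i j → G.Adj (e i).1 (e j).1 := by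
    intro i j h
    exact e.map_rel_iff.2 h
  have hbnadj : ∀ i j, ¬ (SimpleGraph.pathGraph 4).Adj i j → ¬ G.Adj (e i).1 (e j).1 := by
    intro i j h hG
    exact h (e.map_rel_iff.1 hG)
  have hbne : ∀ i j : Fin 4, i ≠ j → (e i).1 ≠ (e j).1 := by
    intro i j hne heq
    exact hne (e.injective (Subtype.ext heq))
  obtain ⟨a0, ha0⟩ := hA.nonempty 0
  have ha0S : a0 ∉ S := by
    rintro ⟨u, _, rfl⟩
    exact u.2.1 (Set.mem_iUnion.2 ⟨0, ha0⟩)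
  obtain ⟨w⟩ := hconn.preconnected (e 0).1 a0
  obtain ⟨d, _, hdS, hdS'⟩ := w.exists_boundary_dart S (e 0).2 ha0S
  have hcomp : ∀ x ∈ S, G.Adj d.toProd.2 x :=
    hhom d.toProd.2 hdS' ⟨d.toProd.1, hdS, d.adj.symm⟩
  have g01 : G.Adj (e 0).1 (e 1).1 := hbadj 0 1 (by decide)
  have g12 : G.Adj (e 1).1 (e 2).1 := hbadj 1 2 (by decide)
  have g23 : G.Adj (e 2).1 (e 3).1 := hbadj 2 3 (by decide)
  have gn02 : ¬ G.Adj (e 0).1 (e 2).1 := hbnadj 0 2 (by decide)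
  have gn03 : ¬ G.Adj (e 0).1 (e 3).1 := hbnadj 0 3 (by decide)
  have gn13 : ¬ G.Adj (e 1).1 (e 3).1 := hbnadj 1 3 (by decide)
  have gv : ∀ k : Fin 4, G.Adj d.toProd.2 (e k).1 := fun k => hcomp (e k).1 (e k).2
  have dv : ∀ k : Fin 4, d.toProd.2 ≠ (e k).1 := fun k h => hdS' (h ▸ (e k).2)
  have d01 : (e 0).1 ≠ (e 1).1 := hbne 0 1 (by decide)
  have d02 : (e 0).1 ≠ (e 2).1 := hbne 0 2 (by decide)
  have d03 : (e 0).1 ≠ (e 3).1 := hbne 0 3 (by decide)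
  have d12 : (e 1).1 ≠ (e 2).1 := hbne 1 2 (by decide)
  have d13 : (e 1).1 ≠ (e 3).1 := hbne 1 3 (by decide)
  have d23 : (e 2).1 ≠ (e 3).1 := hbne 2 3 (by decide)
  refine hgem ⟨embed_of_table gem G ![(e 0).1, (e 1).1, (e 2).1, (e 3).1, d.toProd.2] ?_ ?_ ?_⟩
  · intro i' j' hij
    fin_cases i' <;> fin_cases j' <;>
      first
        | exact absurd rfl hij
        | exact d01 | exact d01.symm | exact d02 | exact d02.symm
        | exact d03 | exact d03.symm | exact d12 | exact d12.symm
        | exact d13 | exact d13.symm | exact d23 | exact d23.symm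
        | exact dv 0 | exact (dv 0).symm | exact dv 1 | exact (dv 1).symm
        | exact dv 2 | exact (dv 2).symm | exact dv 3 | exact (dv 3).symm
  · intro i' j' h
    fin_cases i' <;> fin_cases j' <;>
      first
        | exact absurd h (by decide)
        | exact g01 | exact g01.symm | exact g12 | exact g12.symm
        | exact g23 | exact g23.symm
        | exact gv 0 | exact (gv 0).symm | exact gv 1 | exact (gv 1).symm
        | exact gv 2 | exact (gv 2).symm | exact gv 3 | exact (gv 3).symm
  · intro i' j' hij h
    fin_cases i' <;> fin_cases j' <;>
      first
        | exact absurd rfl hij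
        | exact absurd (by decide) h
        | exact gn02 | exact fun hx => gn02 hx.symm
        | exact gn03 | exact fun hx => gn03 hx.symm
        | exact gn13 | exact fun hx => gn13 hx.symm
end
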